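/- Fix s>0, N∈ℕ and η∈ℕ^N. With 𝒩_i^+(η)=Σ_{k=i}^{N}η_k and f_i(η)=∏_{j=1}^{η_i}(2s(N+1−i)−j+𝒩_i^+(η))/(2s(N+1)−j+𝒩_i^+(η)), one has the telescoping identity ∏_{i=1}^{N} f_i(η) = (Γ(2s(N+1))/Γ(2s)) · ∏_{i=1}^{N} Γ(2s(N+1−i)+𝒩_i^+(η)) / Γ(2s(N+2−i)+𝒩_i^+(η)). -/

import Mathlib

lemma gamma_asc (n : ℕ) : ∀ x : ℝ, 0 < x →
    ∏ j ∈ Finset.Icc 1 n, (x + (n:ℝ) - j) = Real.Gamma (x + n) / Real.Gamma x := by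
  induction n with
  | zero =>
    intro x hx
    simp [div_self (Real.Gamma_pos_of_pos hx).ne']
  | succ n ih =>
    intro x hx
    have h1 : Finset.Icc 1 (n+1) = insert (n+1) (Finset.Icc 1 n) := by
      ext k; simp [Finset.mem_Icc]; omega
    rw [h1, Finset.prod_insert (by simp)]
    have h2 : ∀ j ∈ Finset.Icc 1 n, x + ((n+1:ℕ):ℝ) - (j:ℝ) = (x+1) + (n:ℝ) - j := by
      intro j _; push_cast; ring
    rw [Finset.prod_congr rfl h2, ih (x+1) (by linarith), Real.Gamma_add_one hx.ne']
    have h3 : x + ((n+1:ℕ):ℝ) - ((n+1:ℕ):ℝ) = x := by ring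
    have h4 : x + 1 + (n:ℝ) = x + ((n+1:ℕ):ℝ) := by push_cast; ring
    rw [h3, h4]
    have := (Real.Gamma_pos_of_pos hx).ne'
    field_simp

lemma prod_shift (c : ℕ → ℝ) (N : ℕ) (hc0 : c 0 ≠ 0) :
    ∏ i ∈ Finset.range N, c (i+1) = (∏ i ∈ Finset.range N, c i) * c N / c 0 := by
  rw [eq_div_iff hc0, ← Finset.prod_range_succ', Finset.prod_range_succ]

/-- `𝒩_i^+(η) = Σ_{k=i}^{N} η_k` (0-based indexing: the sum of `η k` over `k ≥ i`). -/
def Nplus {N : ℕ} (η : Fin N → ℕ) (i : Fin N) : ℕ :=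
  ∑ k : Fin N, if i ≤ k then η k else 0

/-- `f_i(η) = ∏_{j=1}^{η_i} (2s(N+1−i)−j+𝒩_i^+(η))/(2s(N+1)−j+𝒩_i^+(η))`
(with `i` 1-based in the paper; here `i : Fin N` is 0-based, so `N+1−i` becomes `N−i`). -/
noncomputable def fFact (s : ℝ) {N : ℕ} (η : Fin N → ℕ) (i : Fin N) : ℝ :=
  ∏ j ∈ Finset.Icc 1 (η i),
    (2 * s * ((N : ℝ) - (i : ℕ)) - (j : ℝ) + (Nplus η i : ℝ)) /
      (2 * s * ((N : ℝ) + 1) - (j : ℝ) + (Nplus η i : ℝ))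

/-- Telescoping identity:
`∏_{i=1}^{N} f_i(η) = (Γ(2s(N+1))/Γ(2s)) · ∏_{i=1}^{N} Γ(2s(N+1−i)+𝒩_i^+(η))/Γ(2s(N+2−i)+𝒩_i^+(η))`. -/
theorem prod_fFact_eq (s : ℝ) (hs : 0 < s) (N : ℕ) (hN : 0 < N) (η : Fin N → ℕ) :
    ∏ i : Fin N, fFact s η i
      = (Real.Gamma (2 * s * ((N : ℝ) + 1)) / Real.Gamma (2 * s)) *
        ∏ i : Fin N,
          Real.Gamma (2 * s * ((N : ℝ) - (i : ℕ)) + (Nplus η i : ℝ)) /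
            Real.Gamma (2 * s * ((N : ℝ) + 1 - (i : ℕ)) + (Nplus η i : ℝ)) := by
  classical
  set ν : ℕ → ℕ := fun k => if h : k < N then η ⟨k, h⟩ else 0 with hν
  set M : ℕ → ℕ := fun i => ∑ k ∈ Finset.Ico i N, ν k with hM
  have hMN : M N = 0 := by simp [hM]
  have hMstep : ∀ i, i < N → M i = ν i + M (i+1) := by
    intro i hi
    simp only [hM]
    rw [Finset.sum_eq_sum_Ico_succ_bot hi]
  have hNplus : ∀ i : Fin N, Nplus η i = M i.1 := by
    intro i
    simp only [hM, Nplus]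
    rw [show Finset.Ico i.1 N = (Finset.range N).filter (fun k => i.1 ≤ k) by
      ext k; simp [Finset.mem_Ico, and_comm]]
    rw [Finset.sum_filter, ← Fin.sum_univ_eq_sum_range (fun k => if i.1 ≤ k then ν k else 0) N]
    refine Finset.sum_congr rfl fun k _ => ?_
    simp only [hν, k.isLt, dif_pos, Fin.eta, Fin.le_def]
  -- Gamma arguments and basic positivity
  have hb : (0:ℝ) < 2 * s * ((N:ℝ) + 1) := by positivity
  -- the three ℕ-indexed Gamma families
  set A : ℕ → ℝ := fun i => Real.Gamma (2 * s * ((N:ℝ) - i) + M i) with hA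
  set c : ℕ → ℝ := fun i => Real.Gamma (2 * s * ((N:ℝ) + 1 - i) + M i) with hc
  set D : ℕ → ℝ := fun i => Real.Gamma (2 * s * ((N:ℝ) + 1) + M i) with hD
  have hcpos : ∀ i, i ≤ N → 0 < c i := by
    intro i hi
    apply Real.Gamma_pos_of_pos
    have h1 : (i:ℝ) ≤ N := by exact_mod_cast hi
    have : (0:ℝ) < 2 * s * ((N:ℝ) + 1 - i) := by
      apply mul_pos (by positivity); linarith
    have : (0:ℝ) ≤ (M i : ℝ) := Nat.cast_nonneg _
    linarith
  have hDpos : ∀ i, 0 < D i := by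
    intro i
    apply Real.Gamma_pos_of_pos
    have : (0:ℝ) ≤ (M i : ℝ) := Nat.cast_nonneg _
    linarith
  -- per-index formula
  have hterm : ∀ i : Fin N, fFact s η i = A i.1 / c (i.1+1) * (D (i.1+1) / D i.1) := by
    intro i
    have hi : i.1 < N := i.isLt
    have hiN : (i.1:ℝ) < N := by exact_mod_cast hi
    have hx1 : (0:ℝ) < 2 * s * ((N:ℝ) - i.1) + M (i.1+1) := by
      have : (0:ℝ) < 2 * s * ((N:ℝ) - i.1) := by
        apply mul_pos (by positivity); linarith
      have : (0:ℝ) ≤ (M (i.1+1) : ℝ) := Nat.cast_nonneg _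
      linarith
    have hx2 : (0:ℝ) < 2 * s * ((N:ℝ) + 1) + M (i.1+1) := by
      have : (0:ℝ) ≤ (M (i.1+1) : ℝ) := Nat.cast_nonneg _
      linarith
    have hMi : (M i.1 : ℝ) = (ν i.1 : ℝ) + (M (i.1+1) : ℝ) := by
      exact_mod_cast congrArg Nat.cast (hMstep i.1 hi)
    have hηi : η i = ν i.1 := by simp [hν, hi]
    unfold fFact
    rw [Finset.prod_div_distrib, hNplus i, hηi]
    have e1 : ∀ j ∈ Finset.Icc 1 (ν i.1),
        2 * s * ((N:ℝ) - i.1) - (j:ℝ) + (M i.1 : ℝ)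
          = (2 * s * ((N:ℝ) - i.1) + M (i.1+1)) + (ν i.1 : ℝ) - j := by
      intro j _; rw [hMi]; ring
    have e2 : ∀ j ∈ Finset.Icc 1 (ν i.1),
        2 * s * ((N:ℝ) + 1) - (j:ℝ) + (M i.1 : ℝ)
          = (2 * s * ((N:ℝ) + 1) + M (i.1+1)) + (ν i.1 : ℝ) - j := by
      intro j _; rw [hMi]; ring
    rw [Finset.prod_congr rfl e1, Finset.prod_congr rfl e2,
      gamma_asc _ _ hx1, gamma_asc _ _ hx2]
    have e3 : 2 * s * ((N:ℝ) - i.1) + (M (i.1+1):ℝ) + (ν i.1:ℝ)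
        = 2 * s * ((N:ℝ) - i.1) + (M i.1 : ℝ) := by rw [hMi]; ring
    have e4 : 2 * s * ((N:ℝ) + 1) + (M (i.1+1):ℝ) + (ν i.1:ℝ)
        = 2 * s * ((N:ℝ) + 1) + (M i.1 : ℝ) := by rw [hMi]; ring
    have e5 : 2 * s * ((N:ℝ) - i.1) + (M (i.1+1):ℝ)
        = 2 * s * ((N:ℝ) + 1 - (i.1+1:ℕ)) + (M (i.1+1):ℝ) := by push_cast; ring
    rw [e3, e4, e5]
    simp only [hA, hc, hD]
    field_simp
  -- convert products over Fin to products over range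
  have hL : ∏ i : Fin N, fFact s η i
      = ∏ i ∈ Finset.range N, (fun i => if h : i < N then A i / c (i+1) * (D (i+1) / D i) else 1) i := by
    rw [← Fin.prod_univ_eq_prod_range]
    refine Finset.prod_congr rfl fun i _ => ?_
    rw [hterm i]
    simp [i.isLt]
  have hR : (∏ i : Fin N,
        Real.Gamma (2 * s * ((N : ℝ) - (i : ℕ)) + (Nplus η i : ℝ)) /
          Real.Gamma (2 * s * ((N : ℝ) + 1 - (i : ℕ)) + (Nplus η i : ℝ)))
      = ∏ i ∈ Finset.range N, (fun i => A i / c i) i := by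
    rw [← Fin.prod_univ_eq_prod_range]
    refine Finset.prod_congr rfl fun i _ => ?_
    simp only [hA, hc, hNplus i]
  rw [hL, hR]
  -- now pure range-N manipulation
  have step1 : ∏ i ∈ Finset.range N,
      (fun i => if h : i < N then A i / c (i+1) * (D (i+1) / D i) else 1) i
      = ∏ i ∈ Finset.range N, (A i / c (i+1) * (D (i+1) / D i)) := by
    refine Finset.prod_congr rfl fun i hi => ?_
    simp [Finset.mem_range.mp hi]
  rw [step1]
  have hc0 : c 0 ≠ 0 := (hcpos 0 (by omega)).ne'
  have hcN : c N = Real.Gamma (2 * s) := by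
    simp only [hc, hMN]
    norm_num
  have hDN : D N = Real.Gamma (2 * s * ((N:ℝ) + 1)) := by
    simp only [hD, hMN]; norm_num
  have hcD0 : c 0 = D 0 := by simp only [hc, hD]; norm_num
  rw [Finset.prod_mul_distrib, Finset.prod_div_distrib, Finset.prod_div_distrib,
    Finset.prod_div_distrib,
    prod_shift c N hc0, prod_shift D N (hDpos 0).ne', hcN, hDN, hcD0]
  have h1 : (∏ i ∈ Finset.range N, c i) ≠ 0 := by
    apply Finset.prod_ne_zero_iff.mpr
    intro i hi; exact (hcpos i (le_of_lt (Finset.mem_range.mp hi))).ne'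
  have h2 : (∏ i ∈ Finset.range N, D i) ≠ 0 := by
    apply Finset.prod_ne_zero_iff.mpr
    intro i _; exact (hDpos i).ne'
  have h3 : Real.Gamma (2*s) ≠ 0 := (Real.Gamma_pos_of_pos (by positivity)).ne'
  have h4 : D 0 ≠ 0 := (hDpos 0).ne'
  field_simp
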